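/- For every r∈(0,1), ψ(r²) · ψ(((1−r)/(1+r))²) = 1. -/

import Mathlib

open Real Set Filter Topology

/-- Complete elliptic integral of the first kind. -/
noncomputable def EK (r : ℝ) : ℝ :=
  ∫ t in (0:ℝ)..(π/2), 1 / Real.sqrt (1 - r^2 * Real.sin t ^ 2)

/-- Complete elliptic integral of the second kind. -/
noncomputable def EE (r : ℝ) : ℝ :=
  ∫ t in (0:ℝ)..(π/2), Real.sqrt (1 - r^2 * Real.sin t ^ 2)

/-- K'(r) = K(√(1-r²)). -/
noncomputable def EK' (r : ℝ) : ℝ := EK (Real.sqrt (1 - r^2))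

/-- E'(r) = E(√(1-r²)). -/
noncomputable def EE' (r : ℝ) : ℝ := EE (Real.sqrt (1 - r^2))

/-- The function ψ. -/
noncomputable def psi (r : ℝ) : ℝ :=
  2 * (EE r - (1 - r) * EK r) / (EE' r - r * EK' r)

-- basic positivity

lemma delta_sq_pos {k : ℝ} (hk : k^2 < 1) (t : ℝ) : 0 < 1 - k^2 * Real.sin t ^ 2 := by
  nlinarith [Real.sin_sq_le_one t, sq_nonneg k, Real.sin_sq_le_one t, sq_nonneg (Real.sin t)]

lemma delta_pos {k : ℝ} (hk : k^2 < 1) (t : ℝ) : 0 < Real.sqrt (1 - k^2 * Real.sin t ^ 2) :=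
  Real.sqrt_pos.2 (delta_sq_pos hk t)

lemma cont_delta (k : ℝ) : Continuous (fun t => Real.sqrt (1 - k^2 * Real.sin t ^ 2)) :=
  (continuous_const.sub (continuous_const.mul (Real.continuous_sin.pow 2))).sqrt

lemma cont_inv_delta {k : ℝ} (hk : k^2 < 1) :
    Continuous (fun t => 1 / Real.sqrt (1 - k^2 * Real.sin t ^ 2)) :=
  continuous_const.div (cont_delta k) (fun t => (delta_pos hk t).ne')

/-- The Gauss substitution function. -/
noncomputable def gl (m θ : ℝ) : ℝ := Real.arcsin ((1+m) * Real.sin θ / (1 + m * Real.sin θ^2))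

/-- Derivative of the Gauss substitution. -/
noncomputable def glD (m θ : ℝ) : ℝ :=
  (1+m) * (1 - m * Real.sin θ^2) / ((1 + m * Real.sin θ^2) * Real.sqrt (1 - m^2 * Real.sin θ^2))

lemma v_pos {m : ℝ} (hm0 : 0 < m) (θ : ℝ) : 0 < 1 + m * Real.sin θ^2 := by
  nlinarith [sq_nonneg (Real.sin θ)]

lemma sin_gl {m : ℝ} (hm0 : 0 < m) (hm1 : m < 1) (θ : ℝ) :
    Real.sin (gl m θ) = (1+m) * Real.sin θ / (1 + m * Real.sin θ^2) := by
  have hv := v_pos hm0 θ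
  apply Real.sin_arcsin
  · rw [le_div_iff₀ hv]
    have h1 : (0:ℝ) ≤ 1 + Real.sin θ := by nlinarith [Real.neg_one_le_sin θ]
    have h2 : (0:ℝ) ≤ 1 + m * Real.sin θ := by nlinarith [Real.neg_one_le_sin θ]
    nlinarith [mul_nonneg h1 h2]
  · rw [div_le_one hv]
    have h1 : (0:ℝ) ≤ 1 - Real.sin θ := by nlinarith [Real.sin_le_one θ]
    have h2 : (0:ℝ) ≤ 1 - m * Real.sin θ := by nlinarith [Real.sin_le_one θ]
    nlinarith [mul_nonneg h1 h2]

lemma one_sub_phi_sq {m : ℝ} (hm0 : 0 < m) (hm1 : m < 1) (θ : ℝ) :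
    1 - ((1+m) * Real.sin θ / (1 + m * Real.sin θ^2))^2
      = (Real.cos θ * Real.sqrt (1 - m^2 * Real.sin θ^2) / (1 + m * Real.sin θ^2))^2 := by
  have hv := v_pos hm0 θ
  have hc2 := Real.cos_sq' θ
  have hd2 : Real.sqrt (1 - m^2 * Real.sin θ^2) ^ 2 = 1 - m^2 * Real.sin θ^2 := by
    apply Real.sq_sqrt
    nlinarith [Real.sin_sq_le_one θ, sq_nonneg m]
  field_simp
  rw [hd2, hc2]
  ring

lemma gl_hasDerivAt {m : ℝ} (hm0 : 0 < m) (hm1 : m < 1) {θ : ℝ} (hc : 0 < Real.cos θ) :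
    HasDerivAt (gl m) (glD m θ) θ := by
  have hv := v_pos hm0 θ
  have hm2 : m^2 < 1 := by nlinarith
  have hd0 := delta_pos hm2 θ
  set d := Real.sqrt (1 - m^2 * Real.sin θ^2) with hd
  have hd2 : d ^ 2 = 1 - m^2 * Real.sin θ^2 := Real.sq_sqrt (delta_sq_pos hm2 θ).le
  set φ : ℝ → ℝ := fun θ => (1+m) * Real.sin θ / (1 + m * Real.sin θ^2) with hφ
  have hsq := one_sub_phi_sq hm0 hm1 θ
  have hsqrt : Real.sqrt (1 - φ θ ^ 2) = Real.cos θ * d / (1 + m * Real.sin θ^2) := by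
    rw [hφ]; simp only []
    rw [hsq, Real.sqrt_sq (by positivity)]
  have hppos : 0 < 1 - φ θ ^ 2 := by
    rw [hφ]; simp only []
    rw [hsq]; positivity
  have hne1 : φ θ ≠ 1 := by intro h; rw [h] at hppos; norm_num at hppos
  have hnem1 : φ θ ≠ -1 := by intro h; rw [h] at hppos; norm_num at hppos
  have h1 : HasDerivAt (fun t => (1+m) * Real.sin t) ((1+m) * Real.cos θ) θ :=
    (Real.hasDerivAt_sin θ).const_mul (1+m)
  have h2 : HasDerivAt (fun t => 1 + m * Real.sin t^2) (m * (2 * Real.sin θ ^ 1 * Real.cos θ)) θ := by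
    have := ((Real.hasDerivAt_sin θ).pow 2).const_mul m
    simpa using this.const_add 1
  have hφd : HasDerivAt φ
      (((1+m) * Real.cos θ * (1 + m * Real.sin θ^2) - (1+m) * Real.sin θ * (m * (2 * Real.sin θ ^ 1 * Real.cos θ))) / (1 + m * Real.sin θ^2)^2) θ :=
    h1.div h2 hv.ne'
  have harc := (Real.hasDerivAt_arcsin hnem1 hne1).comp θ hφd
  have : gl m = Real.arcsin ∘ φ := rfl
  rw [this]
  refine harc.congr_deriv ?_
  rw [hsqrt, glD, ← hd]
  have hcd : Real.cos θ * d ≠ 0 := by positivity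
  field_simp
  ring

lemma gl_continuous {m : ℝ} (hm0 : 0 < m) : Continuous (gl m) := by
  apply Real.continuous_arcsin.comp
  exact (continuous_const.mul Real.continuous_sin).div
    (continuous_const.add (continuous_const.mul (Real.continuous_sin.pow 2)))
    (fun θ => (v_pos hm0 θ).ne')

lemma gl_zero (m : ℝ) : gl m 0 = 0 := by simp [gl]

lemma gl_pi_div_two {m : ℝ} (hm0 : 0 < m) : gl m (π/2) = π/2 := by
  have : (1+m) * Real.sin (π/2) / (1 + m * Real.sin (π/2)^2) = 1 := by
    rw [Real.sin_pi_div_two]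
    field_simp
  rw [gl, this, Real.arcsin_one]

lemma glD_continuous {m : ℝ} (hm0 : 0 < m) (hm1 : m < 1) : Continuous (glD m) := by
  have hm2 : m^2 < 1 := by nlinarith
  apply Continuous.div
  · exact continuous_const.mul (continuous_const.sub (continuous_const.mul (Real.continuous_sin.pow 2)))
  · exact (continuous_const.add (continuous_const.mul (Real.continuous_sin.pow 2))).mul (cont_delta m)
  · intro θ
    exact (mul_pos (v_pos hm0 θ) (delta_pos hm2 θ)).ne'

lemma subst_main {m : ℝ} (hm0 : 0 < m) (hm1 : m < 1) (f : ℝ → ℝ) (hf : Continuous f)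
    {b : ℝ} (hb0 : 0 ≤ b) (hb : b < π/2) :
    (∫ x in (0:ℝ)..(gl m b), f x) = ∫ θ in (0:ℝ)..b, glD m θ * f (gl m θ) := by
  have hderiv : ∀ x ∈ uIcc (0:ℝ) b, HasDerivAt (gl m) (glD m x) x := by
    intro x hx
    rw [uIcc_of_le hb0] at hx
    apply gl_hasDerivAt hm0 hm1
    apply Real.cos_pos_of_mem_Ioo
    constructor
    · linarith [hx.1, Real.pi_pos]
    · exact lt_of_le_of_lt hx.2 hb
  have h := intervalIntegral.integral_comp_smul_deriv hderiv
    ((glD_continuous hm0 hm1).continuousOn) hf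
  rw [gl_zero] at h
  rw [← h]
  simp [smul_eq_mul]

lemma one_sub_k1_phi {m : ℝ} (hm0 : 0 < m) (hm1 : m < 1) (θ : ℝ) :
    1 - (2*Real.sqrt m/(1+m))^2 * Real.sin (gl m θ)^2
      = ((1 - m * Real.sin θ^2)/(1 + m * Real.sin θ^2))^2 := by
  have hv := v_pos hm0 θ
  have hk₁sq : (2*Real.sqrt m/(1+m))^2 = 4*m/(1+m)^2 := by
    rw [div_pow, mul_pow]
    rw [Real.sq_sqrt hm0.le]; norm_num
  rw [sin_gl hm0 hm1 θ, hk₁sq]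
  have h1m : (1:ℝ)+m ≠ 0 := by positivity
  field_simp
  ring

lemma sqrt_one_sub_k1_phi {m : ℝ} (hm0 : 0 < m) (hm1 : m < 1) (θ : ℝ) :
    Real.sqrt (1 - (2*Real.sqrt m/(1+m))^2 * Real.sin (gl m θ)^2)
      = (1 - m * Real.sin θ^2)/(1 + m * Real.sin θ^2) := by
  rw [one_sub_k1_phi hm0 hm1 θ]
  apply Real.sqrt_sq
  have hv := v_pos hm0 θ
  have : 0 ≤ 1 - m * Real.sin θ^2 := by nlinarith [Real.sin_sq_le_one θ]
  positivity

lemma landen_pointwise_K {m : ℝ} (hm0 : 0 < m) (hm1 : m < 1) (θ : ℝ) :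
    glD m θ * (1 / Real.sqrt (1 - (2*Real.sqrt m/(1+m))^2 * Real.sin (gl m θ)^2))
      = (1+m) * (1 / Real.sqrt (1 - m^2 * Real.sin θ^2)) := by
  have hm2 : m^2 < 1 := by nlinarith
  have hv := v_pos hm0 θ
  have hd0 := delta_pos hm2 θ
  have hnum : (0:ℝ) < 1 - m * Real.sin θ^2 := by nlinarith [Real.sin_sq_le_one θ]
  rw [sqrt_one_sub_k1_phi hm0 hm1 θ, glD]
  field_simp

lemma k1_mem {m : ℝ} (hm0 : 0 < m) (hm1 : m < 1) : (2*Real.sqrt m/(1+m))^2 < 1 := by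
  have h : (2*Real.sqrt m/(1+m))^2 = 4*m/(1+m)^2 := by
    rw [div_pow, mul_pow, Real.sq_sqrt hm0.le]; norm_num
  rw [h, div_lt_one (by positivity)]
  nlinarith

lemma landen_K {m : ℝ} (hm0 : 0 < m) (hm1 : m < 1) :
    EK (2*Real.sqrt m/(1+m)) = (1+m) * EK m := by
  have hm2 : m^2 < 1 := by nlinarith
  have hk₁ := k1_mem hm0 hm1
  set fk₁ : ℝ → ℝ := fun t => 1 / Real.sqrt (1 - (2*Real.sqrt m/(1+m))^2 * Real.sin t^2) with hfk₁
  set fk : ℝ → ℝ := fun t => 1 / Real.sqrt (1 - m^2 * Real.sin t^2) with hfk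
  have hcont₁ : Continuous fk₁ := cont_inv_delta hk₁
  have hcont : Continuous fk := cont_inv_delta hm2
  have key : ∀ b ∈ Ico (0:ℝ) (π/2),
      (∫ x in (0:ℝ)..(gl m b), fk₁ x) = (1+m) * ∫ θ in (0:ℝ)..b, fk θ := by
    intro b hb
    rw [subst_main hm0 hm1 fk₁ hcont₁ hb.1 hb.2]
    rw [← intervalIntegral.integral_const_mul]
    apply intervalIntegral.integral_congr
    intro θ _
    exact landen_pointwise_K hm0 hm1 θ
  have hP1 : Continuous (fun y => ∫ x in (0:ℝ)..y, fk₁ x) :=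
    intervalIntegral.continuous_primitive (fun a b => hcont₁.intervalIntegrable a b) 0
  have hP2 : Continuous (fun y => ∫ x in (0:ℝ)..y, fk x) :=
    intervalIntegral.continuous_primitive (fun a b => hcont.intervalIntegrable a b) 0
  have hpi : (0:ℝ) < π/2 := by positivity
  have hcomp : Tendsto (gl m) (𝓝[<] (π/2)) (𝓝 (π/2)) := by
    have h := (gl_continuous hm0).tendsto (π/2)
    rw [gl_pi_div_two hm0] at h
    exact h.mono_left nhdsWithin_le_nhds
  have T1 : Tendsto (fun b => ∫ x in (0:ℝ)..(gl m b), fk₁ x) (𝓝[<] (π/2))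
      (𝓝 (EK (2*Real.sqrt m/(1+m)))) := by
    have hEK : EK (2*Real.sqrt m/(1+m)) = ∫ x in (0:ℝ)..(π/2), fk₁ x := rfl
    rw [hEK]
    exact (hP1.tendsto (π/2)).comp hcomp
  have T2 : Tendsto (fun b => (1+m) * ∫ θ in (0:ℝ)..b, fk θ) (𝓝[<] (π/2))
      (𝓝 ((1+m) * EK m)) := by
    have hEK : (1+m) * EK m = (1+m) * ∫ x in (0:ℝ)..(π/2), fk x := rfl
    rw [hEK]
    exact ((continuous_const.mul hP2).tendsto (π/2)).mono_left nhdsWithin_le_nhds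
  have heq : (fun b => ∫ x in (0:ℝ)..(gl m b), fk₁ x) =ᶠ[𝓝[<] (π/2)]
      (fun b => (1+m) * ∫ θ in (0:ℝ)..b, fk θ) := by
    filter_upwards [Ioo_mem_nhdsLT_of_mem (show (π/2:ℝ) ∈ Ioc 0 (π/2) from ⟨hpi, le_refl _⟩)]
      with b hb
    exact key b ⟨hb.1.le, hb.2⟩
  exact tendsto_nhds_unique (T1.congr' heq) T2

noncomputable def FF (m θ : ℝ) : ℝ :=
  Real.sin θ * Real.cos θ * Real.sqrt (1 - m^2 * Real.sin θ^2) / (1 + m * Real.sin θ^2)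

noncomputable def DD (m θ : ℝ) : ℝ :=
  ((3*m^2*Real.sin θ^4 - 2*(1+m^2)*Real.sin θ^2 + 1) * (1 + m*Real.sin θ^2)
    - 2*m*(Real.sin θ^2*(1-Real.sin θ^2)*(1-m^2*Real.sin θ^2)))
  / ((1 + m*Real.sin θ^2)^2 * Real.sqrt (1 - m^2 * Real.sin θ^2))

lemma hasDerivAt_FF {m : ℝ} (hm0 : 0 < m) (hm1 : m < 1) (θ : ℝ) :
    HasDerivAt (FF m) (DD m θ) θ := by
  have hm2 : m^2 < 1 := by nlinarith
  have hv : 0 < 1 + m * Real.sin θ^2 := by nlinarith [sq_nonneg (Real.sin θ)]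
  have hu : 0 < 1 - m^2 * Real.sin θ^2 := by nlinarith [Real.sin_sq_le_one θ, sq_nonneg m]
  have hd0 : 0 < Real.sqrt (1 - m^2 * Real.sin θ^2) := Real.sqrt_pos.2 hu
  set d := Real.sqrt (1 - m^2 * Real.sin θ^2) with hd
  have hd2 : d^2 = 1 - m^2 * Real.sin θ^2 := Real.sq_sqrt hu.le
  have hc2 : Real.cos θ^2 = 1 - Real.sin θ^2 := Real.cos_sq' θ
  have h1 : HasDerivAt (fun t => Real.sin t * Real.cos t)
      (Real.cos θ * Real.cos θ + Real.sin θ * (-Real.sin θ)) θ :=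
    (Real.hasDerivAt_sin θ).mul (Real.hasDerivAt_cos θ)
  have h2 : HasDerivAt (fun t => 1 - m^2 * Real.sin t^2)
      (-(m^2 * (2 * Real.sin θ ^ 1 * Real.cos θ))) θ := by
    have := ((Real.hasDerivAt_sin θ).pow 2).const_mul (m^2)
    simpa using this.const_sub 1
  have h3 : HasDerivAt (fun t => Real.sqrt (1 - m^2 * Real.sin t^2))
      (-(m^2 * (2 * Real.sin θ ^ 1 * Real.cos θ)) / (2 * d)) θ :=
    h2.sqrt hu.ne'
  have h4 := h1.mul h3
  have h5 : HasDerivAt (fun t => 1 + m * Real.sin t^2)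
      (m * (2 * Real.sin θ ^ 1 * Real.cos θ)) θ := by
    have := ((Real.hasDerivAt_sin θ).pow 2).const_mul m
    simpa using this.const_add 1
  have h6 := h4.div h5 hv.ne'
  have hFF : FF m = fun t => Real.sin t * Real.cos t * Real.sqrt (1 - m^2 * Real.sin t^2) / (1 + m * Real.sin t^2) := rfl
  rw [hFF]
  refine h6.congr_deriv ?_
  rw [DD]
  simp only [Pi.mul_apply]
  rw [← hd]
  field_simp
  have hd3 : d^3 = d * (1 - m^2 * Real.sin θ^2) := by rw [← hd2]; ring
  have hd4 : d^4 = (1 - m^2 * Real.sin θ^2)^2 := by rw [← hd2]; ring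
  have hc4 : Real.cos θ^4 = (1 - Real.sin θ^2)^2 := by rw [← hc2]; ring
  ring_nf
  simp only [hd2, hd3, hd4, hc2, hc4]
  ring

lemma landen_pointwise_E {m : ℝ} (hm0 : 0 < m) (hm1 : m < 1) (θ : ℝ) :
    glD m θ * Real.sqrt (1 - (2*Real.sqrt m/(1+m))^2 * Real.sin (gl m θ)^2)
      = 2/(1+m) * Real.sqrt (1 - m^2 * Real.sin θ^2)
        - (1-m^2)/(1+m) * (1 / Real.sqrt (1 - m^2 * Real.sin θ^2))
        + 2*m/(1+m) * DD m θ := by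
  rw [sqrt_one_sub_k1_phi hm0 hm1 θ]
  have hm2 : m^2 < 1 := by nlinarith
  have hv : 0 < 1 + m * Real.sin θ^2 := by nlinarith [sq_nonneg (Real.sin θ)]
  have hu : 0 < 1 - m^2 * Real.sin θ^2 := by nlinarith [Real.sin_sq_le_one θ, sq_nonneg m]
  have hd0 : 0 < Real.sqrt (1 - m^2 * Real.sin θ^2) := Real.sqrt_pos.2 hu
  set d := Real.sqrt (1 - m^2 * Real.sin θ^2) with hd
  have hd2 : d^2 = 1 - m^2 * Real.sin θ^2 := Real.sq_sqrt hu.le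
  have h1m : (0:ℝ) < 1 + m := by linarith
  rw [glD, DD, ← hd]
  field_simp
  have hd4 : d^4 = (1 - m^2 * Real.sin θ^2)^2 := by rw [← hd2]; ring
  ring_nf
  simp only [hd2, hd4]
  ring

lemma DD_continuous {m : ℝ} (hm0 : 0 < m) (hm1 : m < 1) : Continuous (DD m) := by
  have hm2 : m^2 < 1 := by nlinarith
  apply Continuous.div
  · fun_prop
  · exact ((continuous_const.add (continuous_const.mul (Real.continuous_sin.pow 2))).pow 2).mul (cont_delta m)
  · intro θ
    exact (mul_pos (pow_pos (v_pos hm0 θ) 2) (delta_pos hm2 θ)).ne'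

lemma FF_continuous {m : ℝ} (hm0 : 0 < m) : Continuous (FF m) := by
  apply Continuous.div
  · exact (Real.continuous_sin.mul Real.continuous_cos).mul (cont_delta m)
  · fun_prop
  · intro θ; exact (v_pos hm0 θ).ne'

lemma FF_zero (m : ℝ) : FF m 0 = 0 := by simp [FF]

lemma FF_pi_div_two (m : ℝ) : FF m (π/2) = 0 := by simp [FF]

lemma landen_E {m : ℝ} (hm0 : 0 < m) (hm1 : m < 1) :
    (1+m) * EE (2*Real.sqrt m/(1+m)) = 2 * EE m - (1-m^2) * EK m := by
  have hm2 : m^2 < 1 := by nlinarith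
  have hk₁ := k1_mem hm0 hm1
  have h1m : (0:ℝ) < 1 + m := by linarith
  set fE₁ : ℝ → ℝ := fun t => Real.sqrt (1 - (2*Real.sqrt m/(1+m))^2 * Real.sin t^2) with hfE₁
  set fE : ℝ → ℝ := fun t => Real.sqrt (1 - m^2 * Real.sin t^2) with hfE
  set fk : ℝ → ℝ := fun t => 1 / Real.sqrt (1 - m^2 * Real.sin t^2) with hfk
  have hcont₁ : Continuous fE₁ := cont_delta _
  have hcontE : Continuous fE := cont_delta m
  have hcontk : Continuous fk := cont_inv_delta hm2
  have key : ∀ b ∈ Ico (0:ℝ) (π/2),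
      (∫ x in (0:ℝ)..(gl m b), fE₁ x)
        = 2/(1+m) * (∫ θ in (0:ℝ)..b, fE θ) - (1-m^2)/(1+m) * (∫ θ in (0:ℝ)..b, fk θ)
          + 2*m/(1+m) * FF m b := by
    intro b hb
    rw [subst_main hm0 hm1 fE₁ hcont₁ hb.1 hb.2]
    have hcongr : (∫ θ in (0:ℝ)..b, glD m θ * fE₁ (gl m θ))
        = ∫ θ in (0:ℝ)..b, (2/(1+m) * fE θ - (1-m^2)/(1+m) * fk θ + 2*m/(1+m) * DD m θ) := by
      apply intervalIntegral.integral_congr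
      intro θ _
      exact landen_pointwise_E hm0 hm1 θ
    rw [hcongr]
    have i1 : IntervalIntegrable (fun θ => 2/(1+m) * fE θ) MeasureTheory.volume 0 b :=
      (continuous_const.mul hcontE).intervalIntegrable 0 b
    have i2 : IntervalIntegrable (fun θ => (1-m^2)/(1+m) * fk θ) MeasureTheory.volume 0 b :=
      (continuous_const.mul hcontk).intervalIntegrable 0 b
    have i3 : IntervalIntegrable (fun θ => 2*m/(1+m) * DD m θ) MeasureTheory.volume 0 b :=
      (continuous_const.mul (DD_continuous hm0 hm1)).intervalIntegrable 0 b
    rw [intervalIntegral.integral_add (i1.sub i2) i3, intervalIntegral.integral_sub i1 i2,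
      intervalIntegral.integral_const_mul, intervalIntegral.integral_const_mul,
      intervalIntegral.integral_const_mul]
    have hftc : (∫ θ in (0:ℝ)..b, DD m θ) = FF m b - FF m 0 :=
      intervalIntegral.integral_eq_sub_of_hasDerivAt
        (fun x _ => hasDerivAt_FF hm0 hm1 x)
        ((DD_continuous hm0 hm1).intervalIntegrable 0 b)
    rw [hftc, FF_zero]
    ring
  -- limits
  have hP1 : Continuous (fun y => ∫ x in (0:ℝ)..y, fE₁ x) :=
    intervalIntegral.continuous_primitive (fun a b => hcont₁.intervalIntegrable a b) 0
  have hPE : Continuous (fun y => ∫ x in (0:ℝ)..y, fE x) :=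
    intervalIntegral.continuous_primitive (fun a b => hcontE.intervalIntegrable a b) 0
  have hPk : Continuous (fun y => ∫ x in (0:ℝ)..y, fk x) :=
    intervalIntegral.continuous_primitive (fun a b => hcontk.intervalIntegrable a b) 0
  have hpi : (0:ℝ) < π/2 := by positivity
  have hcomp : Tendsto (gl m) (𝓝[<] (π/2)) (𝓝 (π/2)) := by
    have h := (gl_continuous hm0).tendsto (π/2)
    rw [gl_pi_div_two hm0] at h
    exact h.mono_left nhdsWithin_le_nhds
  have T1 : Tendsto (fun b => ∫ x in (0:ℝ)..(gl m b), fE₁ x) (𝓝[<] (π/2))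
      (𝓝 (EE (2*Real.sqrt m/(1+m)))) := by
    have hEE : EE (2*Real.sqrt m/(1+m)) = ∫ x in (0:ℝ)..(π/2), fE₁ x := rfl
    rw [hEE]
    exact (hP1.tendsto (π/2)).comp hcomp
  have T2 : Tendsto (fun b => 2/(1+m) * (∫ θ in (0:ℝ)..b, fE θ)
        - (1-m^2)/(1+m) * (∫ θ in (0:ℝ)..b, fk θ) + 2*m/(1+m) * FF m b) (𝓝[<] (π/2))
      (𝓝 (2/(1+m) * EE m - (1-m^2)/(1+m) * EK m)) := by
    have hgoal : (2/(1+m) * EE m - (1-m^2)/(1+m) * EK m)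
        = 2/(1+m) * (∫ x in (0:ℝ)..(π/2), fE x) - (1-m^2)/(1+m) * (∫ x in (0:ℝ)..(π/2), fk x)
          + 2*m/(1+m) * FF m (π/2) := by
      rw [FF_pi_div_two]; rw [EE, EK]; ring
    rw [hgoal]
    apply Tendsto.mono_left _ nhdsWithin_le_nhds
    exact (((continuous_const.mul hPE).sub (continuous_const.mul hPk)).add
      (continuous_const.mul (FF_continuous hm0))).tendsto (π/2)
  have heq : (fun b => ∫ x in (0:ℝ)..(gl m b), fE₁ x) =ᶠ[𝓝[<] (π/2)]
      (fun b => 2/(1+m) * (∫ θ in (0:ℝ)..b, fE θ)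
        - (1-m^2)/(1+m) * (∫ θ in (0:ℝ)..b, fk θ) + 2*m/(1+m) * FF m b) := by
    filter_upwards [Ioo_mem_nhdsLT_of_mem (show (π/2:ℝ) ∈ Ioc 0 (π/2) from ⟨hpi, le_refl _⟩)]
      with b hb
    exact key b ⟨hb.1.le, hb.2⟩
  have hmain := tendsto_nhds_unique (T1.congr' heq) T2
  rw [hmain]
  field_simp

lemma EEK_pos {x : ℝ} (hx0 : 0 < x) (hx1 : x < 1) : 0 < EE x - (1-x^2) * EK x := by
  have hx2 : x^2 < 1 := by nlinarith
  have hrepr : EE x - (1-x^2) * EK x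
      = ∫ t in (0:ℝ)..(π/2), (Real.sqrt (1 - x^2*Real.sin t^2)
          - (1-x^2) * (1 / Real.sqrt (1 - x^2*Real.sin t^2))) := by
    rw [EE, EK, ← intervalIntegral.integral_const_mul,
      ← intervalIntegral.integral_sub ((cont_delta x).intervalIntegrable 0 (π/2))
        (show IntervalIntegrable (fun t => (1-x^2) * (1 / Real.sqrt (1 - x^2*Real.sin t^2))) MeasureTheory.volume 0 (π/2) from (continuous_const.mul (cont_inv_delta hx2)).intervalIntegrable 0 (π/2))]
  rw [hrepr]
  apply intervalIntegral.intervalIntegral_pos_of_pos_on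
  · exact ((cont_delta x).sub (continuous_const.mul (cont_inv_delta hx2))).intervalIntegrable 0 (π/2)
  · intro t ht
    have hd0 := delta_pos hx2 t
    have hd2 : Real.sqrt (1 - x^2*Real.sin t^2)^2 = 1 - x^2*Real.sin t^2 :=
      Real.sq_sqrt (delta_sq_pos hx2 t).le
    have hcos : 0 < Real.cos t := by
      apply Real.cos_pos_of_mem_Ioo
      constructor
      · linarith [ht.1, Real.pi_pos]
      · exact ht.2
    have hsin : Real.sin t^2 < 1 := by
      nlinarith [Real.sin_sq_add_cos_sq t]
    rw [sub_pos, mul_one_div, div_lt_iff₀ hd0]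
    nlinarith [hd2, sq_nonneg x, mul_pos hx0 hx0]
  · positivity

lemma psi_half (r : ℝ) (hr0 : 0 < r) (hr1 : r < 1) :
    psi (r^2) = ((1+r^2)^2 * EE (2*r/(1+r^2)) - (1-r^2)^2 * EK (2*r/(1+r^2)))
      / ((1+r^2)^2 * EE ((1-r^2)/(1+r^2)) - 4*r^2 * EK ((1-r^2)/(1+r^2))) := by
  have h1r2 : (0:ℝ) < 1 + r^2 := by positivity
  have hr20 : (0:ℝ) < r^2 := by positivity
  have hr21 : r^2 < 1 := by nlinarith
  have hk'0 : (0:ℝ) < (1-r^2)/(1+r^2) := by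
    apply div_pos <;> nlinarith
  have hk'1 : (1-r^2)/(1+r^2) < 1 := by
    rw [div_lt_one h1r2]; nlinarith
  have hk0 : (0:ℝ) < 2*r/(1+r^2) := by positivity
  have hk1 : 2*r/(1+r^2) < 1 := by
    rw [div_lt_one h1r2]; nlinarith [sq_nonneg (1-r)]
  have hsr : Real.sqrt (r^2) = r := Real.sqrt_sq hr0.le
  have A1 := landen_K hr20 hr21
  rw [hsr] at A1
  have A2 := landen_E hr20 hr21
  rw [hsr] at A2
  have hsq1 : 2*Real.sqrt ((1-r^2)/(1+r^2))/(1+(1-r^2)/(1+r^2)) = Real.sqrt (1-(r^2)^2) := by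
    rw [show (1:ℝ)-(r^2)^2 = (2*Real.sqrt ((1-r^2)/(1+r^2))/(1+(1-r^2)/(1+r^2)))^2 by
      rw [div_pow, mul_pow, Real.sq_sqrt hk'0.le]
      field_simp
      ring]
    rw [Real.sqrt_sq (by positivity)]
  have A3 := landen_K hk'0 hk'1
  rw [hsq1] at A3
  have A4 := landen_E hk'0 hk'1
  rw [hsq1] at A4
  -- preprocess A3, A4 to polynomial form
  have A3' : (1+r^2) * EK (Real.sqrt (1-(r^2)^2)) = 2 * EK ((1-r^2)/(1+r^2)) := by
    rw [A3]
    have hco : (1+r^2)*(1+(1-r^2)/(1+r^2)) = 2 := by field_simp; ring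
    linear_combination (EK ((1-r^2)/(1+r^2))) * hco
  have A4' : (1+r^2) * EE (Real.sqrt (1-(r^2)^2))
      = (1+r^2)^2 * EE ((1-r^2)/(1+r^2)) - 2*r^2 * EK ((1-r^2)/(1+r^2)) := by
    have h2 : (2*(1+r^2):ℝ) ≠ 0 := by positivity
    apply mul_left_cancel₀ h2
    field_simp at A4
    rw [show (1:ℝ) - r^4 = 1 - (r^2)^2 by ring] at A4
    linear_combination (1+r^2) * A4
  -- now express numerator and denominator
  have hN1 : (1+r^2) * (2*(EE (r^2) - (1-r^2)*EK (r^2)))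
      = (1+r^2)^2 * EE (2*r/(1+r^2)) - (1-r^2)^2 * EK (2*r/(1+r^2)) := by
    linear_combination (-(1+r^2))*A2 + (1-r^2)^2*A1
  have hD1 : (1+r^2) * (EE (Real.sqrt (1-(r^2)^2)) - r^2 * EK (Real.sqrt (1-(r^2)^2)))
      = (1+r^2)^2 * EE ((1-r^2)/(1+r^2)) - 4*r^2 * EK ((1-r^2)/(1+r^2)) := by
    linear_combination A4' - r^2 * A3'
  have hYpos : 0 < (1+r^2)^2 * EE ((1-r^2)/(1+r^2)) - 4*r^2 * EK ((1-r^2)/(1+r^2)) := by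
    have h := EEK_pos hk'0 hk'1
    have hco : (1+r^2)^2 * EE ((1-r^2)/(1+r^2)) - 4*r^2 * EK ((1-r^2)/(1+r^2))
        = (1+r^2)^2 * (EE ((1-r^2)/(1+r^2)) - (1-((1-r^2)/(1+r^2))^2) * EK ((1-r^2)/(1+r^2))) := by
      field_simp
      ring
    rw [hco]
    exact mul_pos (by positivity) h
  have hD0 : EE (Real.sqrt (1-(r^2)^2)) - r^2 * EK (Real.sqrt (1-(r^2)^2)) ≠ 0 := by
    intro h
    rw [h, mul_zero] at hD1
    rw [← hD1] at hYpos
    exact lt_irrefl 0 hYpos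
  simp only [psi, EE', EK']
  rw [div_eq_div_iff hD0 hYpos.ne']
  linear_combination (EE (Real.sqrt (1-(r^2)^2)) - r^2 * EK (Real.sqrt (1-(r^2)^2))) * hN1
    - (2*(EE (r^2) - (1-r^2)*EK (r^2))) * hD1

theorem psi_identity_sq (r : ℝ) (hr : r ∈ Ioo (0:ℝ) 1) :
    psi (r^2) * psi (((1 - r) / (1 + r))^2) = 1 := by
  obtain ⟨hr0, hr1⟩ := hr
  have h1r : (0:ℝ) < 1 + r := by linarith
  have h1r2 : (0:ℝ) < 1 + r^2 := by positivity
  have hs0 : (0:ℝ) < (1-r)/(1+r) := div_pos (by linarith) h1r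
  have hs1 : (1-r)/(1+r) < 1 := by rw [div_lt_one h1r]; linarith
  have hk'0 : (0:ℝ) < (1-r^2)/(1+r^2) := by apply div_pos <;> nlinarith
  have hk'1 : (1-r^2)/(1+r^2) < 1 := by rw [div_lt_one h1r2]; nlinarith
  have hk0 : (0:ℝ) < 2*r/(1+r^2) := by positivity
  have hk1 : 2*r/(1+r^2) < 1 := by rw [div_lt_one h1r2]; nlinarith [sq_nonneg (1-r)]
  have H1 := psi_half r hr0 hr1
  have H2 := psi_half ((1-r)/(1+r)) hs0 hs1
  have hswap1 : 2*((1-r)/(1+r))/(1+((1-r)/(1+r))^2) = (1-r^2)/(1+r^2) := by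
    rw [div_eq_div_iff (by positivity) h1r2.ne']
    field_simp
    ring
  have hswap2 : (1-((1-r)/(1+r))^2)/(1+((1-r)/(1+r))^2) = 2*r/(1+r^2) := by
    rw [div_eq_div_iff (by positivity) h1r2.ne']
    field_simp
    ring
  rw [hswap1, hswap2] at H2
  have hYr : 0 < (1+r^2)^2 * EE ((1-r^2)/(1+r^2)) - 4*r^2 * EK ((1-r^2)/(1+r^2)) := by
    have h := EEK_pos hk'0 hk'1
    have hco : (1+r^2)^2 * EE ((1-r^2)/(1+r^2)) - 4*r^2 * EK ((1-r^2)/(1+r^2))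
        = (1+r^2)^2 * (EE ((1-r^2)/(1+r^2)) - (1-((1-r^2)/(1+r^2))^2) * EK ((1-r^2)/(1+r^2))) := by
      field_simp
      ring
    rw [hco]
    exact mul_pos (by positivity) h
  have hYs : 0 < (1+((1-r)/(1+r))^2)^2 * EE (2*r/(1+r^2)) - 4*((1-r)/(1+r))^2 * EK (2*r/(1+r^2)) := by
    have h := EEK_pos hk0 hk1
    have hco : (1+((1-r)/(1+r))^2)^2 * EE (2*r/(1+r^2)) - 4*((1-r)/(1+r))^2 * EK (2*r/(1+r^2))
        = (1+((1-r)/(1+r))^2)^2 * (EE (2*r/(1+r^2)) - (1-(2*r/(1+r^2))^2) * EK (2*r/(1+r^2))) := by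
      field_simp
      ring
    rw [hco]
    exact mul_pos (by positivity) h
  rw [H1, H2, div_mul_div_comm, div_eq_one_iff_eq (mul_pos hYr hYs).ne']
  field_simp
  ring
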